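/- arXiv:2409.05208 — 2 statements merged into one kernel-verified Lean document; each statement's English description precedes it below -/
import Mathlib

section
/- Fix d ≥ 2, arbitrary labels y_2,…,y_d ∈ {1,-1}, the test set Z_test = {(e_1,1)}, the training family Z_train = {(e_i, y_i) : i = 2,…,d} ∪ {(e_1,1), (-e_1,1)} of size n = d+1, and the sample z_bar = (-e_1,1). Then for every θ ∈ ℝ^d, the influence of z_bar satisfies I_θ(z_bar, Z_test) = (d+1)/2; in particular I_θ(z_bar, Z_test) > 0 for every θ ∈ ℝ^d, and this influence value is independent of θ. -/
open Matrix
noncomputable section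

/-- The sigmoid function `σ(t) = 1/(1+exp(-t))`. -/
def sigmoid (t : ℝ) : ℝ := 1 / (1 + Real.exp (-t))

/-- A labeled sample `(x, y)` with `x ∈ ℝ^d` and label `y ∈ ℝ` (intended `y ∈ {1,-1}`). -/
abbrev Sample (d : ℕ) := (Fin d → ℝ) × ℝ

/-- Gradient in `θ` of the logistic loss `L((x,y),θ) = log(1+exp(-y⟨x,θ⟩))`,
namely `-y·σ(-y⟨x,θ⟩)·x`. -/
def lossGrad {d : ℕ} (z : Sample d) (θ : Fin d → ℝ) : Fin d → ℝ :=
  (-z.2 * sigmoid (-(z.2 * (z.1 ⬝ᵥ θ)))) • z.1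

/-- Empirical-loss Hessian `H_θ = (1/n)·Σ_i σ(⟨x_i,θ⟩)σ(-⟨x_i,θ⟩)·x_i x_iᵀ`. -/
def hess {d n : ℕ} (Ztrain : Fin n → Sample d) (θ : Fin d → ℝ) : Matrix (Fin d) (Fin d) ℝ :=
  (n : ℝ)⁻¹ • ∑ i, (sigmoid ((Ztrain i).1 ⬝ᵥ θ) * sigmoid (-((Ztrain i).1 ⬝ᵥ θ))) •
    vecMulVec (Ztrain i).1 (Ztrain i).1

/-- Influence of a training sample `z` on a test set `Ztest`:
`I_θ(z, Ztest) = Σ_j -g_{ztest_j}(θ)ᵀ H_θ⁻¹ g_z(θ)`. -/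
def influence {d n m : ℕ} (Ztrain : Fin n → Sample d) (θ : Fin d → ℝ)
    (z : Sample d) (Ztest : Fin m → Sample d) : ℝ :=
  ∑ j, -(lossGrad (Ztest j) θ ⬝ᵥ ((hess Ztrain θ)⁻¹ *ᵥ lossGrad z θ))


/-- The concrete training family of size `d+1`: index `0` is the target `(e_1, 1)`,
indices `1,...,d-1` are `(e_i, y_i)`, and index `d` is `(-e_1, 1)`. -/
def trainFam (d : ℕ) (hd : 0 < d) (y : Fin d → ℝ) (i : Fin (d + 1)) : Sample d :=
  if h : (i : ℕ) < d then
    if _h0 : (i : ℕ) = 0 then (Pi.single (⟨0, hd⟩ : Fin d) 1, 1)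
    else (Pi.single (⟨(i : ℕ), h⟩ : Fin d) 1, y ⟨(i : ℕ), h⟩)
  else (-Pi.single (⟨0, hd⟩ : Fin d) 1, 1)

/-- The concrete test set `Z_test = {(e_1, 1)}`. -/
def testFam (d : ℕ) (hd : 0 < d) : Fin 1 → Sample d :=
  fun _ => (Pi.single (⟨0, hd⟩ : Fin d) 1, 1)

lemma sigmoid_pos (t : ℝ) : 0 < sigmoid t := by
  unfold sigmoid; positivity

lemma sum_smul_vecMulVec {d : ℕ} (c : Fin d → ℝ) :
    ∑ i, c i • vecMulVec (Pi.single i (1:ℝ)) (Pi.single i 1) = Matrix.diagonal c := by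
  ext i j
  simp only [Matrix.sum_apply, Matrix.smul_apply, vecMulVec_apply, Pi.single_apply,
    Matrix.diagonal_apply, smul_eq_mul]
  rcases eq_or_ne i j with rfl | hij
  · rw [Finset.sum_eq_single i] <;> simp +contextual [eq_comm]
  · rw [Finset.sum_eq_zero]
    · simp [hij]
    · intro k _
      rcases eq_or_ne i k with rfl | h2 <;> simp_all [eq_comm]

lemma smul_vecMulVec_single {d : ℕ} (j : Fin d) (c : ℝ) :
    c • vecMulVec (Pi.single j (1:ℝ)) (Pi.single j 1) = Matrix.diagonal (Pi.single j c) := by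
  ext i k
  simp only [Matrix.smul_apply, vecMulVec_apply, Pi.single_apply, Matrix.diagonal_apply,
    smul_eq_mul]
  rcases eq_or_ne i j with rfl | hij
  · rcases eq_or_ne k i with rfl | hk
    · simp
    · simp [hk, Ne.symm hk]
  · rcases eq_or_ne i k with rfl | hk <;> simp [hij]

lemma trainFam_fst_castSucc (d : ℕ) (h : 0 < d) (y : Fin d → ℝ) (i : Fin d) :
    (trainFam d h y i.castSucc).1 = Pi.single i 1 := by
  simp only [trainFam, Fin.coe_castSucc]
  rw [dif_pos i.isLt]
  split_ifs with h0
  · have : (⟨0, h⟩ : Fin d) = i := by ext; simp [h0]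
    rw [this]
  · simp

lemma trainFam_last (d : ℕ) (h : 0 < d) (y : Fin d → ℝ) :
    trainFam d h y (Fin.last d) = (-Pi.single (⟨0, h⟩ : Fin d) 1, 1) := by
  simp [trainFam]

lemma hess_eq (d : ℕ) (h : 0 < d) (y θ : Fin d → ℝ) :
    hess (trainFam d h y) θ = Matrix.diagonal (fun k : Fin d => ((d:ℝ)+1)⁻¹ *
      ((if k.val = 0 then 2 else 1) * (sigmoid (θ k) * sigmoid (-θ k)))) := by
  unfold hess
  rw [Fin.sum_univ_castSucc]
  have e1 : ∀ i : Fin d, (sigmoid ((trainFam d h y i.castSucc).1 ⬝ᵥ θ) *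
      sigmoid (-((trainFam d h y i.castSucc).1 ⬝ᵥ θ))) •
      vecMulVec (trainFam d h y i.castSucc).1 (trainFam d h y i.castSucc).1
      = (sigmoid (θ i) * sigmoid (-θ i)) • vecMulVec (Pi.single i 1) (Pi.single i 1) := by
    intro i
    rw [trainFam_fst_castSucc, single_dotProduct, one_mul]
  have e2 : (sigmoid ((trainFam d h y (Fin.last d)).1 ⬝ᵥ θ) *
      sigmoid (-((trainFam d h y (Fin.last d)).1 ⬝ᵥ θ))) •
      vecMulVec (trainFam d h y (Fin.last d)).1 (trainFam d h y (Fin.last d)).1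
      = (sigmoid (θ ⟨0,h⟩) * sigmoid (-θ ⟨0,h⟩)) •
        vecMulVec (Pi.single (⟨0,h⟩ : Fin d) 1) (Pi.single (⟨0,h⟩ : Fin d) 1) := by
    rw [trainFam_last]
    simp only [neg_dotProduct, single_dotProduct, one_mul, neg_neg]
    rw [show vecMulVec (-Pi.single (⟨0,h⟩ : Fin d) (1:ℝ)) (-Pi.single (⟨0,h⟩ : Fin d) 1)
        = vecMulVec (Pi.single (⟨0,h⟩ : Fin d) 1) (Pi.single (⟨0,h⟩ : Fin d) 1) by
      ext i k; simp [vecMulVec_apply]]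
    ring_nf
  rw [Finset.sum_congr rfl fun i _ => e1 i, e2, sum_smul_vecMulVec, smul_vecMulVec_single,
    Matrix.diagonal_add, ← Matrix.diagonal_smul]
  refine congrArg _ (funext fun k => ?_)
  rcases eq_or_ne k (⟨0,h⟩ : Fin d) with rfl | hk
  · have h0 : ((⟨0,h⟩ : Fin d) : ℕ) = 0 := rfl
    simp only [Pi.smul_apply, Pi.add_apply, Pi.single_eq_same, smul_eq_mul, h0, if_true,
      Nat.cast_add, Nat.cast_one]
    ring
  · have hk0 : (k : ℕ) ≠ 0 := fun hc => hk (Fin.ext hc)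
    simp only [Pi.smul_apply, Pi.add_apply, Pi.single_eq_of_ne hk, smul_eq_mul,
      if_neg hk0, add_zero, Nat.cast_add, Nat.cast_one]
    ring


/-- for every `θ`, the influence of the sample `z_bar = (-e_1, 1)`
(on the test set `{(e_1,1)}`) equals `(d+1)/2`, a positive constant independent of `θ`. -/
theorem influence_bar_eq_pos (d : ℕ) (hd : 2 ≤ d) (y : Fin d → ℝ)
    (hy : ∀ i, y i = 1 ∨ y i = -1) (θ : Fin d → ℝ) :
    influence (trainFam d (by omega) y) θ (trainFam d (by omega) y (Fin.last d))
        (testFam d (by omega)) = ((d : ℝ) + 1) / 2 ∧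
    0 < influence (trainFam d (by omega) y) θ (trainFam d (by omega) y (Fin.last d))
        (testFam d (by omega)) := by
  have h : 0 < d := by omega
  set j0 : Fin d := ⟨0, h⟩ with hj0
  set w : Fin d → ℝ := fun k : Fin d => ((d:ℝ)+1)⁻¹ *
      ((if k.val = 0 then 2 else 1) * (sigmoid (θ k) * sigmoid (-θ k))) with hw
  have hdpos : (0:ℝ) < (d:ℝ) + 1 := by positivity
  have hwne : ∀ k, w k ≠ 0 := by
    intro k
    have h1 := sigmoid_pos (θ k)
    have h2 := sigmoid_pos (-θ k)
    simp only [hw]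
    split_ifs <;> positivity
  have hinv : (Matrix.diagonal w)⁻¹ = Matrix.diagonal (fun k => (w k)⁻¹) := by
    apply Matrix.inv_eq_right_inv
    rw [Matrix.diagonal_mul_diagonal, ← Matrix.diagonal_one]
    exact congrArg _ (funext fun k => mul_inv_cancel₀ (hwne k))
  have hg1 : lossGrad (testFam d h 0) θ
      = (-sigmoid (-θ j0)) • (Pi.single j0 (1:ℝ) : Fin d → ℝ) := by
    simp [lossGrad, testFam, single_dotProduct, hj0]
  have hg2 : lossGrad (trainFam d h y (Fin.last d)) θ
      = (sigmoid (θ j0)) • (Pi.single j0 (1:ℝ) : Fin d → ℝ) := by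
    rw [trainFam_last]
    simp only [lossGrad, neg_dotProduct, single_dotProduct, one_mul, neg_neg, neg_mul]
    rw [smul_neg, ← neg_smul, neg_neg]
  have hmv : Matrix.diagonal (fun k => (w k)⁻¹) *ᵥ (Pi.single j0 (1:ℝ) : Fin d → ℝ)
      = Pi.single j0 ((w j0)⁻¹) := by
    ext k
    rw [mulVec_diagonal]
    rcases eq_or_ne k j0 with rfl | hk
    · simp
    · simp [Pi.single_eq_of_ne hk]
  have key : influence (trainFam d h y) θ (trainFam d h y (Fin.last d)) (testFam d h)
      = ((d : ℝ) + 1) / 2 := by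
    unfold influence
    rw [Fin.sum_univ_one, hess_eq d h y θ, ← hw, hg1, hg2, hinv, Matrix.mulVec_smul, hmv,
      smul_dotProduct, dotProduct_smul, single_dotProduct]
    have hpj0 : (Pi.single j0 ((w j0)⁻¹) : Fin d → ℝ) j0 = (w j0)⁻¹ := Pi.single_eq_same _ _
    rw [hpj0]
    have hwj0 : w j0 = ((d:ℝ)+1)⁻¹ * (2 * (sigmoid (θ j0) * sigmoid (-θ j0))) := by
      simp [hw, hj0]
    rw [hwj0]
    have h1 := (sigmoid_pos (θ j0)).ne'
    have h2 := (sigmoid_pos (-θ j0)).ne'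
    field_simp
    have e : sigmoid (-θ j0) * sigmoid (θ j0) * (sigmoid (-θ j0))⁻¹ * (sigmoid (θ j0))⁻¹ = 1 := by
      field_simp
    linear_combination ((d:ℝ) + 1) * e
  constructor
  · exact key
  · rw [show influence (trainFam d (by omega : 0 < d) y) θ
        (trainFam d (by omega : 0 < d) y (Fin.last d)) (testFam d (by omega : 0 < d))
        = ((d:ℝ)+1)/2 from key]
    positivity
end
end

section
/- Fix d ≥ 2, a positive integer K, arbitrary labels y_2,…,y_d ∈ {1,-1}, the test set Z_test = {(e_1,1)}, and the training family Z_train consisting of (e_i, y_i) for i = 2,…,d, the point z_target = (e_1,1), and K duplicated copies z_bar^1,…,z_bar^K of (-e_1,1) (so n = d+K). Then for every θ ∈ ℝ^d, the empirical-loss Hessian H_θ is invertible, I_θ(z_target, Z_test) < 0, and I_θ(z_bar^k, Z_test) > 0 for every k ∈ {1,…,K}; consequently, for every θ there are at least K members of the training family whose influence strictly exceeds that of z_target, so z_target never attains a top-K influence ranking. -/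
open Matrix
noncomputable section

/-- The concrete training family of size `d+K`: index `0` is the target `(e_1, 1)`,
indices `1,...,d-1` are `(e_i, y_i)`, and indices `d,...,d+K-1` are `K` duplicated copies
of `(-e_1, 1)`. -/
def trainFamK (d K : ℕ) (hd : 0 < d) (y : Fin d → ℝ) (i : Fin (d + K)) : Sample d :=
  if h : (i : ℕ) < d then
    if _h0 : (i : ℕ) = 0 then (Pi.single (⟨0, hd⟩ : Fin d) 1, 1)
    else (Pi.single (⟨(i : ℕ), h⟩ : Fin d) 1, y ⟨(i : ℕ), h⟩)
  else (-Pi.single (⟨0, hd⟩ : Fin d) 1, 1)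

def idxK (d K : ℕ) (hd : 0 < d) (i : Fin (d + K)) : Fin d :=
  if h : (i : ℕ) < d then ⟨(i : ℕ), h⟩ else ⟨0, hd⟩

lemma single_mul_single {d : ℕ} (j a b : Fin d) :
    (Pi.single j 1 : Fin d → ℝ) a * (Pi.single j 1 : Fin d → ℝ) b
      = if a = b then (Pi.single j 1 : Fin d → ℝ) a else 0 := by
  simp only [Pi.single_apply]
  by_cases ha : a = j <;> by_cases hb : b = j <;> by_cases hab : a = b <;> simp_all

lemma trainFamK_fst (d K : ℕ) (hd : 0 < d) (y : Fin d → ℝ) (i : Fin (d + K)) :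
    (trainFamK d K hd y i).1 = (Pi.single (idxK d K hd i) 1 : Fin d → ℝ) ∨
    (trainFamK d K hd y i).1 = -(Pi.single (idxK d K hd i) 1 : Fin d → ℝ) := by
  unfold trainFamK idxK
  split_ifs with h h0
  · left
    have : (⟨(i : ℕ), h⟩ : Fin d) = ⟨0, hd⟩ := by
      simp only [Fin.mk.injEq]; omega
    rw [this]
  · left; rfl
  · right; rfl

lemma trainFamK_fst_mul (d K : ℕ) (hd : 0 < d) (y : Fin d → ℝ) (i : Fin (d + K)) (a b : Fin d) :
    (trainFamK d K hd y i).1 a * (trainFamK d K hd y i).1 b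
      = if a = b then (Pi.single (idxK d K hd i) 1 : Fin d → ℝ) a else 0 := by
  rcases trainFamK_fst d K hd y i with h | h
  · rw [h]; exact single_mul_single _ _ _
  · rw [h]; simp only [Pi.neg_apply, neg_mul_neg]; exact single_mul_single _ _ _

def hdiag (d K : ℕ) (hd : 0 < d) (y θ : Fin d → ℝ) : Fin d → ℝ := fun j =>
  ((d + K : ℕ) : ℝ)⁻¹ * ∑ i : Fin (d + K),
    (sigmoid ((trainFamK d K hd y i).1 ⬝ᵥ θ) * sigmoid (-((trainFamK d K hd y i).1 ⬝ᵥ θ))) *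
      (Pi.single (idxK d K hd i) 1 : Fin d → ℝ) j

lemma hess_eq_s9 (d K : ℕ) (hd : 0 < d) (y θ : Fin d → ℝ) :
    hess (trainFamK d K hd y) θ = Matrix.diagonal (hdiag d K hd y θ) := by
  ext a b
  simp only [hess, Matrix.smul_apply, Matrix.sum_apply, smul_eq_mul, vecMulVec_apply,
    Matrix.diagonal_apply, hdiag]
  rcases eq_or_ne a b with rfl | hab
  · simp only [if_pos rfl]
    congr 1
    apply Finset.sum_congr rfl
    intro i _
    rw [trainFamK_fst_mul d K hd y i a a, if_pos rfl]
  · rw [if_neg hab]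
    have : ∀ i ∈ Finset.univ, (sigmoid ((trainFamK d K hd y i).1 ⬝ᵥ θ) *
        sigmoid (-((trainFamK d K hd y i).1 ⬝ᵥ θ))) *
        ((trainFamK d K hd y i).1 a * (trainFamK d K hd y i).1 b) = 0 := by
      intro i _
      rw [trainFamK_fst_mul d K hd y i a b, if_neg hab, mul_zero]
    calc ((d + K : ℕ) : ℝ)⁻¹ * ∑ i : Fin (d + K), (sigmoid ((trainFamK d K hd y i).1 ⬝ᵥ θ) *
          sigmoid (-((trainFamK d K hd y i).1 ⬝ᵥ θ))) * ((trainFamK d K hd y i).1 a * (trainFamK d K hd y i).1 b)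
        = ((d + K : ℕ) : ℝ)⁻¹ * ∑ _i : Fin (d + K), (0:ℝ) := by
          rw [Finset.sum_congr rfl this]
      _ = 0 := by simp

lemma hdiag_pos (d K : ℕ) (hd : 0 < d) (y θ : Fin d → ℝ) (j : Fin d) :
    0 < hdiag d K hd y θ j := by
  unfold hdiag
  apply mul_pos
  · rw [inv_pos]
    exact_mod_cast Nat.add_pos_left hd K
  · apply Finset.sum_pos'
    · intro i _
      apply mul_nonneg (mul_pos (sigmoid_pos _) (sigmoid_pos _)).le
      simp only [Pi.single_apply]
      split_ifs <;> norm_num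
    · refine ⟨⟨(j : ℕ), by omega⟩, Finset.mem_univ _, ?_⟩
      have hidx : idxK d K hd ⟨(j : ℕ), by omega⟩ = j := by
        unfold idxK
        rw [dif_pos (j.isLt)]
      rw [hidx, Pi.single_eq_same, mul_one]
      exact mul_pos (sigmoid_pos _) (sigmoid_pos _)

lemma hess_inv (d K : ℕ) (hd : 0 < d) (y θ : Fin d → ℝ) :
    (hess (trainFamK d K hd y) θ)⁻¹
      = Matrix.diagonal (fun j => (hdiag d K hd y θ j)⁻¹) := by
  rw [hess_eq_s9]
  apply Matrix.inv_eq_right_inv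
  rw [Matrix.diagonal_mul_diagonal]
  have h1 : (fun i => hdiag d K hd y θ i * (hdiag d K hd y θ i)⁻¹) = fun _ => (1:ℝ) := by
    funext j
    exact mul_inv_cancel₀ (hdiag_pos d K hd y θ j).ne'
  rw [h1, Matrix.diagonal_one]

lemma hess_isUnit (d K : ℕ) (hd : 0 < d) (y θ : Fin d → ℝ) :
    IsUnit (hess (trainFamK d K hd y) θ) := by
  rw [hess_eq_s9, Matrix.isUnit_iff_isUnit_det, Matrix.det_diagonal, isUnit_iff_ne_zero]
  exact Finset.prod_ne_zero_iff.2 fun j _ => (hdiag_pos d K hd y θ j).ne'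

lemma influence_eq (d K : ℕ) (hd : 0 < d) (y θ : Fin d → ℝ) (z : Sample d) (c : ℝ)
    (hz : lossGrad z θ = c • (Pi.single (⟨0, hd⟩ : Fin d) 1 : Fin d → ℝ)) :
    influence (trainFamK d K hd y) θ z (testFam d hd)
      = sigmoid (-(θ ⟨0, hd⟩)) * c * (hdiag d K hd y θ ⟨0, hd⟩)⁻¹ := by
  unfold influence testFam
  rw [Fin.sum_univ_one, hz, hess_inv]
  have hgt : lossGrad ((Pi.single (⟨0, hd⟩ : Fin d) 1 : Fin d → ℝ), (1:ℝ)) θ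
      = (-sigmoid (-(θ ⟨0, hd⟩))) • (Pi.single (⟨0, hd⟩ : Fin d) 1 : Fin d → ℝ) := by
    unfold lossGrad
    simp [single_dotProduct]
  rw [hgt]
  rw [Matrix.mulVec_smul, Matrix.diagonal_mulVec_single]
  simp only [smul_dotProduct, dotProduct_smul, single_dotProduct,
    smul_eq_mul, Pi.single_eq_same, mul_one, one_mul]
  ring


/-- for the concrete training family with `K` duplicated copies of `(-e_1,1)`,
for every `θ` the empirical-loss Hessian is invertible, the target `(e_1,1)` has negative
influence, every duplicated copy has positive influence, and hence at least `K` training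
samples have strictly larger influence than the target, so the target never attains a
top-`K` influence ranking. -/
theorem influence_impossibility_topK_concrete (d K : ℕ) (hd : 2 ≤ d) (hK : 0 < K)
    (y : Fin d → ℝ) (hy : ∀ i, y i = 1 ∨ y i = -1) (θ : Fin d → ℝ) :
    IsUnit (hess (trainFamK d K (by omega) y) θ) ∧
    influence (trainFamK d K (by omega) y) θ
        (trainFamK d K (by omega) y ⟨0, by omega⟩) (testFam d (by omega)) < 0 ∧
    (∀ i : Fin (d + K), d ≤ (i : ℕ) →
      0 < influence (trainFamK d K (by omega) y) θ
            (trainFamK d K (by omega) y i) (testFam d (by omega))) ∧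
    K ≤ (Finset.univ.filter (fun i : Fin (d + K) =>
          influence (trainFamK d K (by omega) y) θ
              (trainFamK d K (by omega) y ⟨0, by omega⟩) (testFam d (by omega)) <
            influence (trainFamK d K (by omega) y) θ
              (trainFamK d K (by omega) y i) (testFam d (by omega)))).card := by
  have hd0 : 0 < d := by omega
  -- the target sample
  have htarget : trainFamK d K hd0 y ⟨0, by omega⟩
      = ((Pi.single (⟨0, hd0⟩ : Fin d) 1 : Fin d → ℝ), (1:ℝ)) := by
    unfold trainFamK
    rw [dif_pos (show ((⟨0, by omega⟩ : Fin (d + K)) : ℕ) < d from hd0),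
      dif_pos rfl]
  have hz0 : lossGrad (trainFamK d K hd0 y ⟨0, by omega⟩) θ
      = (-sigmoid (-(θ ⟨0, hd0⟩))) • (Pi.single (⟨0, hd0⟩ : Fin d) 1 : Fin d → ℝ) := by
    rw [htarget]
    unfold lossGrad
    simp [single_dotProduct]
  have hIt := influence_eq d K hd0 y θ _ _ hz0
  have hItneg : influence (trainFamK d K hd0 y) θ (trainFamK d K hd0 y ⟨0, by omega⟩)
      (testFam d hd0) < 0 := by
    rw [hIt]
    have h1 := sigmoid_pos (-(θ ⟨0, hd0⟩))
    have h2 := inv_pos.2 (hdiag_pos d K hd0 y θ ⟨0, hd0⟩)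
    have h3 : sigmoid (-θ ⟨0, hd0⟩) * -sigmoid (-θ ⟨0, hd0⟩) * (hdiag d K hd0 y θ ⟨0, hd0⟩)⁻¹
        = -(sigmoid (-θ ⟨0, hd0⟩) * sigmoid (-θ ⟨0, hd0⟩) * (hdiag d K hd0 y θ ⟨0, hd0⟩)⁻¹) := by
      ring
    rw [h3]
    have h4 := mul_pos (mul_pos h1 h1) h2
    linarith
  -- duplicated samples
  have hdup : ∀ i : Fin (d + K), d ≤ (i : ℕ) → trainFamK d K hd0 y i
      = (-(Pi.single (⟨0, hd0⟩ : Fin d) 1 : Fin d → ℝ), (1:ℝ)) := by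
    intro i hi
    unfold trainFamK
    rw [dif_neg (by omega)]
  have hIdup : ∀ i : Fin (d + K), d ≤ (i : ℕ) →
      0 < influence (trainFamK d K hd0 y) θ (trainFamK d K hd0 y i) (testFam d hd0) := by
    intro i hi
    have hz : lossGrad (trainFamK d K hd0 y i) θ
        = (sigmoid (θ ⟨0, hd0⟩)) • (Pi.single (⟨0, hd0⟩ : Fin d) 1 : Fin d → ℝ) := by
      rw [hdup i hi]
      unfold lossGrad
      simp [neg_dotProduct, single_dotProduct]
    rw [influence_eq d K hd0 y θ _ _ hz]
    have h1 := sigmoid_pos (-(θ ⟨0, hd0⟩))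
    have h1' := sigmoid_pos (θ ⟨0, hd0⟩)
    have h2 := inv_pos.2 (hdiag_pos d K hd0 y θ ⟨0, hd0⟩)
    positivity
  refine ⟨hess_isUnit d K hd0 y θ, hItneg, hIdup, ?_⟩
  calc K = (Finset.univ : Finset (Fin K)).card := by simp
    _ ≤ _ := by
      apply Finset.card_le_card_of_injOn
        (fun k : Fin K => (⟨d + (k : ℕ), by omega⟩ : Fin (d + K)))
      · intro k _
        simp only [Finset.coe_filter, Set.mem_setOf_eq, Finset.mem_filter, Finset.mem_univ, true_and]
        exact lt_trans hItneg (hIdup ⟨d + (k : ℕ), by omega⟩ (by simp))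
      · intro a _ b _ hab
        have := congrArg Fin.val hab
        simp only at this
        exact Fin.ext (by omega)
end
end
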